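/- Under the same hypotheses (a path h_t in G with h₀ = e, h₁(U) ⊆ C, h_t(U) ⊆ U, h_t(C) ⊆ C), the space ℰ_C^G(U,Y) of restrictions to U of elements of G that fix C pointwise admits a strong deformation retraction onto the singleton {i_U} (the inclusion map of U), given by χ_t(f) = ĥ_t⁻¹ ∘ f ∘ ĥ_t|_U. -/

import Mathlib

open unitInterval

open Set in
/-- Auxiliary continuity lemma: for `T` locally compact and `X` Hausdorff, the map
`(t, g) ↦ (x ↦ sg (t, g (t, x)))` from `T × C(T × X, Y)` to `C(X, Z)` is continuous. -/
lemma continuous_timewise_comp {T X Y' Z : Type*} [TopologicalSpace T] [TopologicalSpace X]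
    [TopologicalSpace Y'] [TopologicalSpace Z] [LocallyCompactSpace T] [T2Space X]
    (sg : C(T × Y', Z)) :
    Continuous (fun p : T × C(T × X, Y') =>
      ContinuousMap.mk (fun x => sg (p.1, p.2 (p.1, x)))
        (sg.continuous.comp (continuous_const.prodMk
          (p.2.continuous.comp (continuous_const.prodMk continuous_id))))) := by
  rw [ContinuousMap.continuous_compactOpen]
  intro K hK V hV
  rw [isOpen_iff_forall_mem_open]
  rintro ⟨t₀, g₀⟩ hp
  simp only [Set.mem_setOf_eq] at hp
  have key : ∀ x : X, x ∈ K → ∃ (u : Set T) (o : Set X) (b : Set Y'),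
      IsOpen u ∧ IsOpen o ∧ IsOpen b ∧ t₀ ∈ u ∧ x ∈ o ∧
      (∀ t ∈ u, ∀ y ∈ b, sg (t, y) ∈ V) ∧ (∀ t ∈ u, ∀ x' ∈ o, g₀ (t, x') ∈ b) := by
    intro x hx
    have hW : IsOpen {r : T × Y' | sg r ∈ V} := hV.preimage sg.continuous
    have hmem : (t₀, g₀ (t₀, x)) ∈ {r : T × Y' | sg r ∈ V} := hp hx
    rcases isOpen_prod_iff.1 hW _ _ hmem with ⟨a, b, ha, hb, hta, hyb, hab⟩
    have hW2 : IsOpen {r : T × X | g₀ r ∈ b} := hb.preimage g₀.continuous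
    have hm2 : (t₀, x) ∈ {r : T × X | g₀ r ∈ b} := hyb
    rcases isOpen_prod_iff.1 hW2 _ _ hm2 with ⟨u, o, hu, ho, htu, hxo, huo⟩
    exact ⟨u ∩ a, o, b, hu.inter ha, ho, hb, ⟨htu, hta⟩, hxo,
      fun t ht y hy => hab (Set.mk_mem_prod ht.2 hy),
      fun t ht x' hx' => huo (Set.mk_mem_prod ht.1 hx')⟩
  choose! u o b hu ho hb htu hxo hqV hg₀ using key
  -- finite subcover of `K` by the `o x`
  obtain ⟨s0, hs0K, hs0fin, hs0cov⟩ :=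
    hK.elim_finite_subcover_image (fun x hx => ho x hx) (fun x hx => Set.mem_biUnion hx (hxo x hx))
  classical
  set t : Finset X := hs0fin.toFinset with ht
  have hts0 : ∀ i ∈ t, i ∈ s0 := fun i hi => hs0fin.mem_toFinset.1 hi
  have hcov : K ⊆ ⋃ i ∈ t, o i := by
    intro x hx
    rcases Set.mem_iUnion₂.1 (hs0cov hx) with ⟨i, hi, hxi⟩
    exact Set.mem_iUnion₂.2 ⟨i, hs0fin.mem_toFinset.2 hi, hxi⟩
  obtain ⟨Kc, hKcComp, hKcSub, hKcCov⟩ :=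
    hK.finite_compact_cover t o (fun i hi => ho i (hs0K (hts0 i hi))) hcov
  -- compact neighbourhood of t₀ inside ⋂ u i
  have hu' : IsOpen (⋂ i ∈ t, u i) := isOpen_biInter_finset fun i hi => hu i (hs0K (hts0 i hi))
  have htu' : t₀ ∈ ⋂ i ∈ t, u i := Set.mem_biInter fun i hi => htu i (hs0K (hts0 i hi))
  obtain ⟨L, hLcomp, htL, hLu⟩ := exists_compact_subset hu' htu'
  refine ⟨(interior L) ×ˢ ⋂ i ∈ t, {g : C(T × X, Y') | Set.MapsTo g (L ×ˢ Kc i) (b i)},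
    ?_, ?_, ?_⟩
  · rintro ⟨t1, g⟩ ⟨ht1, hgmem⟩
    intro x hx
    have hx' : x ∈ ⋃ i ∈ t, Kc i := hKcCov ▸ hx
    rcases Set.mem_iUnion₂.1 hx' with ⟨i, hi, hxi⟩
    have hiK : i ∈ K := hs0K (hts0 i hi)
    have ht1L : t1 ∈ L := interior_subset ht1
    have hgb : g (t1, x) ∈ b i := by
      have := Set.mem_iInter₂.1 hgmem i hi
      exact this (Set.mk_mem_prod ht1L hxi)
    have ht1u : t1 ∈ u i := by
      have := hLu ht1L
      exact Set.mem_iInter₂.1 this i hi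
    exact hqV i hiK t1 ht1u _ hgb
  · exact isOpen_interior.prod <| isOpen_biInter_finset fun i hi =>
      ContinuousMap.isOpen_setOf_mapsTo (hLcomp.prod (hKcComp i)) (hb i (hs0K (hts0 i hi)))
  · refine ⟨htL, Set.mem_iInter₂.2 fun i hi => ?_⟩
    rintro ⟨t1, x⟩ ⟨ht1, hx⟩
    have hiK : i ∈ K := hs0K (hts0 i hi)
    have ht1u : t1 ∈ u i := Set.mem_iInter₂.1 (hLu ht1) i hi
    exact hg₀ i hiK t1 ht1u x (hKcSub i hx)

/-- Under the same path hypotheses, the space `ℰ_C^G(U,Y)` of restrictions to `U`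
of elements of `G` fixing `C` pointwise admits a strong deformation retraction onto
the inclusion `i_U`. -/
theorem strong_deformation_retraction_onto_inclusion
    {G Y : Type*} [Group G] [TopologicalSpace G] [IsTopologicalGroup G]
    [TopologicalSpace Y] [LocallyCompactSpace Y] [T2Space Y]
    [MulAction G Y] [ContinuousSMul G Y]
    (U C : Set Y) (hCU : C ⊆ U)
    (h : C(I, G)) (h0 : h 0 = 1)
    (h1U : ∀ x ∈ U, (h 1) • x ∈ C)
    (htU : ∀ (t : I), ∀ x ∈ U, (h t) • x ∈ U)
    (htC : ∀ (t : I), ∀ x ∈ C, (h t) • x ∈ C) :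
    ∃ H : I × {f : C(↥U, Y) // ∃ g : G, (∀ x : ↥U, f x = g • (x : Y)) ∧ ∀ c ∈ C, g • c = c} →
        {f : C(↥U, Y) // ∃ g : G, (∀ x : ↥U, f x = g • (x : Y)) ∧ ∀ c ∈ C, g • c = c},
      Continuous H ∧
      (∀ f, H (0, f) = f) ∧
      (∀ f (x : ↥U), (H (1, f)).1 x = (x : Y)) ∧
      (∀ (t : I) f, (∀ x : ↥U, f.1 x = (x : Y)) → H (t, f) = f) := by
  set E := {f : C(↥U, Y) // ∃ g : G, (∀ x : ↥U, f x = g • (x : Y)) ∧ ∀ c ∈ C, g • c = c}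
  -- the continuous map `β (t, x) = h t • x : U → U`
  have hβcont : Continuous (fun p : I × ↥U => h p.1 • (p.2 : Y)) :=
    ((h.continuous.comp continuous_fst)).smul (continuous_subtype_val.comp continuous_snd)
  set β : C(I × ↥U, ↥U) :=
    ⟨fun p => ⟨h p.1 • (p.2 : Y), htU p.1 p.2 p.2.2⟩, hβcont.subtype_mk _⟩ with hβ
  -- the continuous map `sg (t, y) = (h t)⁻¹ • y`
  set sg : C(I × Y, Y) :=
    ⟨fun p => (h p.1)⁻¹ • p.2,
      ((h.continuous.comp continuous_fst).inv).smul continuous_snd⟩ with hq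
  -- the underlying map of the homotopy
  set F : I × E → C(↥U, Y) := fun p =>
    ContinuousMap.mk (fun x => sg (p.1, (p.2.1.comp β) (p.1, x)))
      (sg.continuous.comp (continuous_const.prodMk
        ((p.2.1.comp β).continuous.comp (continuous_const.prodMk continuous_id)))) with hF
  have hFapp : ∀ (p : I × E) (x : ↥U),
      F p x = (h p.1)⁻¹ • p.2.1 ⟨h p.1 • (x : Y), htU p.1 x x.2⟩ := fun p x => rfl
  have hFcont : Continuous F :=
    (continuous_timewise_comp sg).comp
      (continuous_fst.prodMk
        ((ContinuousMap.continuous_precomp β).comp (continuous_subtype_val.comp continuous_snd)))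
  -- the homotopy with its membership witness
  refine ⟨fun p => ⟨F p, ?_⟩, ?_, ?_, ?_, ?_⟩
  · obtain ⟨g, hg1, hg2⟩ := p.2.2
    refine ⟨(h p.1)⁻¹ * g * h p.1, fun x => ?_, fun c hc => ?_⟩
    · rw [hFapp, hg1]
      simp [mul_smul]
    · have hc' : h p.1 • c ∈ C := htC p.1 c hc
      rw [mul_assoc, mul_smul, mul_smul, hg2 _ hc', inv_smul_smul]
  · exact hFcont.subtype_mk _
  · intro f
    apply Subtype.ext
    ext x
    have hx : (⟨h 0 • (x : Y), htU 0 x x.2⟩ : ↥U) = x := by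
      apply Subtype.ext
      simp [h0]
    show F (0, f) x = f.1 x
    rw [hFapp]
    simp only [hx, h0, inv_one, one_smul]
  · intro f x
    obtain ⟨g, hg1, hg2⟩ := f.2
    show F (1, f) x = (x : Y)
    rw [hFapp, hg1]
    have hc : h 1 • (x : Y) ∈ C := h1U x x.2
    simp only [hg2 _ hc, inv_smul_smul]
  · intro t f hfid
    apply Subtype.ext
    ext x
    show F (t, f) x = f.1 x
    rw [hFapp, hfid, hfid]
    exact inv_smul_smul _ _
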